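/- Let X be a complex Banach space, let g : [0,∞) → X be locally Bochner integrable, let x₀ > 0 and C > 0, and suppose that ‖e^{-x₀t} ∫₀ᵗ e^{x₀s} g(s) ds‖ ≤ C for every t ≥ 0. Then for every x > 0 one has ‖∫₀ᵗ e^{xs} g(s) ds‖ ≤ (1 + |x − x₀|/x) · C · e^{xt} for every t ≥ 0. -/

import Mathlib

open MeasureTheory Filter Set

theorem stmt_3 {X : Type*} [NormedAddCommGroup X] [NormedSpace ℂ X] [CompleteSpace X]
    (g : ℝ → X) (hg : LocallyIntegrableOn g (Set.Ici 0))
    (x₀ C : ℝ) (hx₀ : 0 < x₀) (hC : 0 < C)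
    (hbound : ∀ t : ℝ, 0 ≤ t →
      ‖Real.exp (-x₀ * t) • ∫ s in Set.Ioc (0 : ℝ) t, Real.exp (x₀ * s) • g s‖ ≤ C) :
    ∀ x : ℝ, 0 < x → ∀ t : ℝ, 0 ≤ t →
      ‖∫ s in Set.Ioc (0 : ℝ) t, Real.exp (x * s) • g s‖
        ≤ (1 + |x - x₀| / x) * C * Real.exp (x * t) := by
  intro x hx t ht
  set a : ℝ := x - x₀ with ha
  set φ : ℝ → ℝ := fun u => a * Real.exp (a * u) with hφdef
  set F : ℝ → X := fun u => ∫ s in Set.Ioc (0 : ℝ) u, Real.exp (x₀ * s) • g s with hFdef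
  -- bound on F
  have hF : ∀ u : ℝ, 0 ≤ u → ‖F u‖ ≤ C * Real.exp (x₀ * u) := by
    intro u hu
    have h1 := hbound u hu
    rw [norm_smul, Real.norm_eq_abs, abs_of_pos (Real.exp_pos _)] at h1
    have h2 : Real.exp (-x₀ * u) > 0 := Real.exp_pos _
    have h3 : Real.exp (-x₀ * u) * Real.exp (x₀ * u) = 1 := by
      rw [← Real.exp_add]; ring_nf; exact Real.exp_zero
    nlinarith [norm_nonneg (F u), Real.exp_pos (x₀ * u)]
  -- g integrable on Ioc 0 t
  have hgt : IntegrableOn g (Set.Ioc 0 t) volume :=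
    (hg.integrableOn_compact_subset (Set.Icc_subset_Ici_self) isCompact_Icc).mono_set
      Set.Ioc_subset_Icc_self
  -- integrability of ψ • g for continuous ψ
  have key : ∀ ψ : ℝ → ℝ, Continuous ψ →
      IntegrableOn (fun s => ψ s • g s) (Set.Ioc 0 t) volume := by
    intro ψ hψ
    apply Integrable.smul_of_top_right (𝕜 := ℝ) hgt
    obtain ⟨M, hM⟩ := (isCompact_Icc (a := (0:ℝ)) (b := t)).exists_bound_of_continuousOn
      hψ.continuousOn
    refine memLp_top_of_bound hψ.aestronglyMeasurable.restrict M ?_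
    filter_upwards [ae_restrict_mem measurableSet_Ioc] with s hs
    exact hM s ⟨hs.1.le, hs.2⟩
  have hcont : ∀ c : ℝ, Continuous fun s : ℝ => Real.exp (c * s) :=
    fun c => Real.continuous_exp.comp (continuous_const.mul continuous_id)
  -- value of ∫ φ over Ioc s t
  have hIφ : ∀ s : ℝ, s ≤ t → (∫ u in Set.Ioc s t, φ u) = Real.exp (a * t) - Real.exp (a * s) := by
    intro s hst
    rw [← intervalIntegral.integral_of_le hst]
    have : ∀ u ∈ Set.uIcc s t, HasDerivAt (fun v => Real.exp (a * v)) (φ u) u := by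
      intro u _
      have h0 : HasDerivAt (fun v : ℝ => Real.exp (a * v)) (Real.exp (a * u) * (a * 1)) u :=
        ((hasDerivAt_id u).const_mul a).exp
      have h1 : Real.exp (a * u) * (a * 1) = φ u := by rw [hφdef]; ring
      rwa [h1] at h0
    exact intervalIntegral.integral_eq_sub_of_hasDerivAt this
      ((continuous_const.mul (hcont a)).intervalIntegrable s t)
  -- exp product identity
  have hexp : ∀ s : ℝ, Real.exp (a * s) * Real.exp (x₀ * s) = Real.exp (x * s) := by
    intro s
    rw [← Real.exp_add]
    congr 1
    simp only [ha]; ring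
  set h : ℝ → X := fun s => Real.exp (x₀ * s) • g s with hhdef
  have hhint : IntegrableOn h (Set.Ioc 0 t) volume := key _ (hcont x₀)
  -- integrability of (∫ u in Ioc s t, φ u) • h s
  have hψint : IntegrableOn (fun s => (∫ u in Set.Ioc s t, φ u) • h s) (Set.Ioc 0 t) volume := by
    have hbase : IntegrableOn
        (fun s => ((Real.exp (a * t) - Real.exp (a * s)) * Real.exp (x₀ * s)) • g s)
        (Set.Ioc 0 t) volume :=
      key _ (((continuous_const.sub (hcont a)).mul (hcont x₀)))
    apply hbase.congr
    filter_upwards [ae_restrict_mem measurableSet_Ioc] with s hs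
    rw [hIφ s hs.2, hhdef]
    rw [smul_smul]
  -- Fubini kernel
  set f : ℝ → ℝ → X := fun s u => if s < u then φ u • h s else 0 with hfdef
  have hfint : Integrable (Function.uncurry f)
      ((volume.restrict (Set.Ioc (0:ℝ) t)).prod (volume.restrict (Set.Ioc (0:ℝ) t))) := by
    have hφint : Integrable φ (volume.restrict (Set.Ioc (0:ℝ) t)) :=
      ((continuous_const.mul (hcont a)).integrableOn_Ioc)
    have hbase : Integrable (fun z : ℝ × ℝ => φ z.1 • h z.2)
        ((volume.restrict (Set.Ioc (0:ℝ) t)).prod (volume.restrict (Set.Ioc (0:ℝ) t))) :=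
      hφint.smul_prod hhint
    have hswap : Integrable (fun z : ℝ × ℝ => φ z.2 • h z.1)
        ((volume.restrict (Set.Ioc (0:ℝ) t)).prod (volume.restrict (Set.Ioc (0:ℝ) t))) :=
      hbase.swap
    have : Function.uncurry f = Set.indicator {p : ℝ × ℝ | p.1 < p.2}
        (fun z : ℝ × ℝ => φ z.2 • h z.1) := by
      funext p
      rw [Set.indicator_apply]
      rfl
    rw [this]
    exact hswap.indicator (measurableSet_lt measurable_fst measurable_snd)
  -- Fubini computation
  have hfub : (∫ s in Set.Ioc (0:ℝ) t, (∫ u in Set.Ioc s t, φ u) • h s)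
      = ∫ u in Set.Ioc (0:ℝ) t, φ u • F u := by
    have hswap := integral_integral_swap hfint
    have hL : (∫ s in Set.Ioc (0:ℝ) t, ∫ u in Set.Ioc (0:ℝ) t, f s u)
        = ∫ s in Set.Ioc (0:ℝ) t, (∫ u in Set.Ioc s t, φ u) • h s := by
      apply setIntegral_congr_fun measurableSet_Ioc
      intro s hs
      have hind : ∀ u : ℝ, f s u = Set.indicator (Set.Ioi s) (fun u => φ u • h s) u := by
        intro u
        rw [Set.indicator_apply]
        rfl
      simp only [hind]
      rw [setIntegral_indicator measurableSet_Ioi]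
      have hset : Set.Ioc (0:ℝ) t ∩ Set.Ioi s = Set.Ioc s t := by
        ext u
        simp only [Set.mem_inter_iff, Set.mem_Ioc, Set.mem_Ioi]
        constructor
        · rintro ⟨⟨_, h2⟩, h3⟩; exact ⟨h3, h2⟩
        · rintro ⟨h1, h2⟩; exact ⟨⟨lt_trans hs.1 h1, h2⟩, h1⟩
      rw [hset, integral_smul_const]
    have hR : (∫ u in Set.Ioc (0:ℝ) t, ∫ s in Set.Ioc (0:ℝ) t, f s u)
        = ∫ u in Set.Ioc (0:ℝ) t, φ u • F u := by
      apply setIntegral_congr_fun measurableSet_Ioc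
      intro u hu
      have hind : ∀ s : ℝ, f s u = Set.indicator (Set.Iio u) (fun s => φ u • h s) s := by
        intro s
        rw [Set.indicator_apply]
        rfl
      simp only [hind]
      rw [setIntegral_indicator measurableSet_Iio]
      have hset : Set.Ioc (0:ℝ) t ∩ Set.Iio u = Set.Ioo 0 u := by
        ext s
        simp only [Set.mem_inter_iff, Set.mem_Ioc, Set.mem_Ioo, Set.mem_Iio]
        constructor
        · rintro ⟨⟨h1, _⟩, h3⟩; exact ⟨h1, h3⟩
        · rintro ⟨h1, h2⟩; exact ⟨⟨h1, le_trans h2.le hu.2⟩, h2⟩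
      rw [hset, ← integral_Ioc_eq_integral_Ioo, integral_smul]
    rw [← hL, hswap, hR]
  -- main decomposition
  have hmain : (∫ s in Set.Ioc (0:ℝ) t, Real.exp (x * s) • g s)
      = Real.exp (a * t) • F t - ∫ u in Set.Ioc (0:ℝ) t, φ u • F u := by
    have hsplit : ∀ s ∈ Set.Ioc (0:ℝ) t,
        Real.exp (x * s) • g s
          = Real.exp (a * t) • h s - (∫ u in Set.Ioc s t, φ u) • h s := by
      intro s hs
      rw [hIφ s hs.2, hhdef]
      simp only [smul_smul, ← sub_smul]
      congr 1
      rw [← hexp s]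
      ring
    have hint1 : Integrable (fun s => Real.exp (a * t) • h s)
        (volume.restrict (Set.Ioc (0:ℝ) t)) := hhint.smul (Real.exp (a * t))
    rw [setIntegral_congr_fun measurableSet_Ioc hsplit, integral_sub hint1 hψint,
      integral_smul, hfub]
  -- now the bound
  rw [hmain]
  have hFt : ‖F t‖ ≤ C * Real.exp (x₀ * t) := hF t ht
  have hnorm2 : ‖∫ u in Set.Ioc (0:ℝ) t, φ u • F u‖
      ≤ ∫ u in Set.Ioc (0:ℝ) t, |a| * Real.exp (x * u) * C := by
    apply norm_integral_le_of_norm_le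
    · exact (((continuous_const.mul (hcont x)).mul continuous_const).integrableOn_Ioc)
    · filter_upwards [ae_restrict_mem measurableSet_Ioc] with u hu
      rw [norm_smul, Real.norm_eq_abs, hφdef]
      have h1 : |a * Real.exp (a * u)| = |a| * Real.exp (a * u) := by
        rw [abs_mul, abs_of_pos (Real.exp_pos _)]
      rw [h1]
      have h2 : ‖F u‖ ≤ C * Real.exp (x₀ * u) := hF u hu.1.le
      have h3 : |a| * Real.exp (a * u) * (C * Real.exp (x₀ * u))
          = |a| * Real.exp (x * u) * C := by
        rw [← hexp u]; ring
      calc |a| * Real.exp (a * u) * ‖F u‖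
          ≤ |a| * Real.exp (a * u) * (C * Real.exp (x₀ * u)) := by
            apply mul_le_mul_of_nonneg_left h2
            positivity
        _ = |a| * Real.exp (x * u) * C := h3
  have hIexp : (∫ u in Set.Ioc (0:ℝ) t, Real.exp (x * u)) = (Real.exp (x * t) - 1) / x := by
    rw [← intervalIntegral.integral_of_le ht]
    have hderiv : ∀ u ∈ Set.uIcc (0:ℝ) t,
        HasDerivAt (fun v => Real.exp (x * v) / x) (Real.exp (x * u)) u := by
      intro u _
      have h0 : HasDerivAt (fun v : ℝ => Real.exp (x * v) / x)
          (Real.exp (x * u) * (x * 1) / x) u :=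
        (((hasDerivAt_id u).const_mul x).exp).div_const x
      have h1 : Real.exp (x * u) * (x * 1) / x = Real.exp (x * u) := by
        field_simp
      rwa [h1] at h0
    rw [intervalIntegral.integral_eq_sub_of_hasDerivAt hderiv ((hcont x).intervalIntegrable 0 t)]
    rw [mul_zero, Real.exp_zero]
    ring
  have hI2 : (∫ u in Set.Ioc (0:ℝ) t, |a| * Real.exp (x * u) * C)
      = |a| * C * ((Real.exp (x * t) - 1) / x) := by
    have : (fun u => |a| * Real.exp (x * u) * C)
        = fun u => (|a| * C) * Real.exp (x * u) := by funext u; ring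
    rw [this, integral_const_mul, hIexp]
  calc ‖Real.exp (a * t) • F t - ∫ u in Set.Ioc (0:ℝ) t, φ u • F u‖
      ≤ ‖Real.exp (a * t) • F t‖ + ‖∫ u in Set.Ioc (0:ℝ) t, φ u • F u‖ := norm_sub_le _ _
    _ ≤ Real.exp (a * t) * (C * Real.exp (x₀ * t)) + |a| * C * ((Real.exp (x * t) - 1) / x) := by
        apply add_le_add
        · rw [norm_smul, Real.norm_eq_abs, abs_of_pos (Real.exp_pos _)]
          exact mul_le_mul_of_nonneg_left hFt (Real.exp_pos _).le
        · exact hnorm2.trans (le_of_eq hI2)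
    _ ≤ (1 + |x - x₀| / x) * C * Real.exp (x * t) := by
        have h1 : Real.exp (a * t) * (C * Real.exp (x₀ * t)) = C * Real.exp (x * t) := by
          rw [← mul_assoc, mul_comm (Real.exp (a * t)) C, mul_assoc, hexp t]
        rw [h1, ← ha]
        have h2 : (Real.exp (x * t) - 1) / x ≤ Real.exp (x * t) / x := by
          gcongr
          linarith
        have h3 : |a| * C * ((Real.exp (x * t) - 1) / x) ≤ |a| * C * (Real.exp (x * t) / x) := by
          apply mul_le_mul_of_nonneg_left h2
          positivity
        have h4 : (1 + |a| / x) * C * Real.exp (x * t)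
            = C * Real.exp (x * t) + |a| * C * (Real.exp (x * t) / x) := by
          field_simp
        linarith
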